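/- arXiv:1806.05206 — 7 statements merged into one kernel-verified Lean document; each statement's English description precedes it below -/
import Mathlib

section
/- For every E > λ₀ and every x ∈ F₊, the supremum Q(E,x) = sup_{y∈F₋} φ_{E,x}(y) is finite and satisfies the two-sided bound ⟨x, Ax⟩ − E‖x‖² ≤ Q(E,x) ≤ ⟨x, Ax⟩ − E‖x‖² + ‖Λ₋(Ax)‖²/(E−λ₀); in particular, φ_{E,x}(y) ≤ ⟨x, Ax⟩ − E‖x‖² + ‖Λ₋(Ax)‖²/(E−λ₀) for every y ∈ F₋. -/
local notation "⟪" x ", " y "⟫" => @inner ℂ _ _ x y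

/-- For `E > λ₀` and `x ∈ F₊`, the Schur complement value
`Q(E,x) = sup_{y ∈ F₋} φ_{E,x}(y)` (with `φ_{E,x}(y) = ⟨x+y, A(x+y)⟩ − E‖x+y‖²`) is finite
and satisfies `⟨x,Ax⟩ − E‖x‖² ≤ Q(E,x) ≤ ⟨x,Ax⟩ − E‖x‖² + ‖Λ₋(Ax)‖²/(E−λ₀)`; in
particular every `φ_{E,x}(y)`, `y ∈ F₋`, is bounded by the right-hand side. -/
theorem schur_complement_sup_bounds
    {H : Type*} [NormedAddCommGroup H] [InnerProductSpace ℂ H] [CompleteSpace H]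
    (A : H →ₗ.[ℂ] H)
    (hdense : Dense (A.domain : Set H))
    (hsymm : ∀ x y : A.domain, ⟪A x, (y : H)⟫ = ⟪(x : H), A y⟫)
    (P : H →L[ℂ] H)
    (hPsa : ∀ u v : H, ⟪P u, v⟫ = ⟪u, P v⟫)
    (hPidem : ∀ u : H, P (P u) = P u)
    (hPinv : ∀ x ∈ A.domain, P x ∈ A.domain)
    (lam0 : ℝ)
    (hlam0 : ∀ y : A.domain, P (y : H) = 0 →
      (⟪(y : H), A y⟫).re ≤ lam0 * ‖(y : H)‖ ^ 2)
    (E : ℝ) (hE : lam0 < E)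
    (x : A.domain) (hx : P (x : H) = (x : H))
    (S : Set ℝ)
    (hS : S = {r : ℝ | ∃ y : A.domain, P (y : H) = 0 ∧
      r = (⟪(x : H) + (y : H), A (x + y)⟫).re - E * ‖(x : H) + (y : H)‖ ^ 2}) :
    BddAbove S ∧
    (⟪(x : H), A x⟫).re - E * ‖(x : H)‖ ^ 2 ≤ sSup S ∧
    sSup S ≤ (⟪(x : H), A x⟫).re - E * ‖(x : H)‖ ^ 2 +
      ‖A x - P (A x)‖ ^ 2 / (E - lam0) ∧
    ∀ y : A.domain, P (y : H) = 0 →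
      (⟪(x : H) + (y : H), A (x + y)⟫).re - E * ‖(x : H) + (y : H)‖ ^ 2 ≤
        (⟪(x : H), A x⟫).re - E * ‖(x : H)‖ ^ 2 + ‖A x - P (A x)‖ ^ 2 / (E - lam0) := by
  have hδ : (0:ℝ) < E - lam0 := by linarith
  set c : ℝ := (⟪(x : H), A x⟫).re - E * ‖(x : H)‖ ^ 2 with hc
  set w : H := A x - P (A x) with hw
  -- per-element bound
  have key : ∀ y : A.domain, P (y : H) = 0 →
      (⟪(x : H) + (y : H), A (x + y)⟫).re - E * ‖(x : H) + (y : H)‖ ^ 2 ≤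
        c + ‖w‖ ^ 2 / (E - lam0) := by
    intro y hy
    have hxy : ⟪(x : H), (y : H)⟫ = 0 := by
      calc ⟪(x : H), (y : H)⟫ = ⟪P (x : H), (y : H)⟫ := by rw [hx]
        _ = ⟪(x : H), P (y : H)⟫ := hPsa _ _
        _ = 0 := by rw [hy, inner_zero_right]
    have hnorm : ‖(x : H) + (y : H)‖ ^ 2 = ‖(x : H)‖ ^ 2 + ‖(y : H)‖ ^ 2 := by
      rw [@norm_add_sq ℂ, hxy]
      simp
    have hAadd : A (x + y) = A x + A y := A.map_add x y
    have hcross : (⟪(x : H), A y⟫).re = (⟪(y : H), A x⟫).re := by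
      rw [← hsymm x y]
      exact inner_re_symm (𝕜 := ℂ) _ _
    have hexp : (⟪(x : H) + (y : H), A (x + y)⟫).re =
        (⟪(x : H), A x⟫).re + 2 * (⟪(y : H), A x⟫).re + (⟪(y : H), A y⟫).re := by
      rw [hAadd, inner_add_left, inner_add_right, inner_add_right]
      simp only [Complex.add_re]
      rw [hcross]; ring
    have hyw : (⟪(y : H), A x⟫).re = (⟪(y : H), w⟫).re := by
      have : ⟪(y : H), P (A x)⟫ = 0 := by
        rw [← hPsa, hy, inner_zero_left]
      rw [hw, inner_sub_right, this]
      simp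
    have hb : (⟪(y : H), w⟫).re ≤ ‖(y : H)‖ * ‖w‖ := by
      calc (⟪(y : H), w⟫).re ≤ ‖⟪(y : H), w⟫‖ := Complex.re_le_norm _
        _ ≤ ‖(y : H)‖ * ‖w‖ := norm_inner_le_norm _ _
    have hyAy := hlam0 y hy
    have hquad : 2 * (⟪(y : H), w⟫).re - (E - lam0) * ‖(y : H)‖ ^ 2 ≤
        ‖w‖ ^ 2 / (E - lam0) := by
      rw [le_div_iff₀ hδ]
      nlinarith [sq_nonneg ((E - lam0) * ‖(y : H)‖ - ‖w‖), hb, hδ,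
        norm_nonneg (y : H), norm_nonneg w]
    rw [hexp, hnorm, hyw]
    simp only [hc]
    nlinarith [hquad, hyAy]
  have hmem : c ∈ S := by
    rw [hS]
    refine ⟨0, by simp, ?_⟩
    simp [hc]
  have hbdd : BddAbove S := by
    refine ⟨c + ‖w‖ ^ 2 / (E - lam0), ?_⟩
    rintro r hr
    rw [hS] at hr
    obtain ⟨y, hy, rfl⟩ := hr
    exact key y hy
  refine ⟨hbdd, le_csSup hbdd hmem, ?_, key⟩
  refine csSup_le ⟨c, hmem⟩ ?_
  rintro r hr
  rw [hS] at hr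
  obtain ⟨y, hy, rfl⟩ := hr
  exact key y hy
end

section
/- For λ₀ < E < E′ and every x ∈ F₊ one has Q(E,x) ≥ Q(E′,x) + (E′−E)·‖x‖²; in particular, for fixed x ∈ F₊ \ {0} the function E ↦ Q(E,x) is strictly decreasing on (λ₀, ∞). -/
local notation "⟪" x ", " y "⟫" => @inner ℂ _ _ x y

/-- For `λ₀ < E < E′` and every `x ∈ F₊` one has `Q(E,x) ≥ Q(E′,x) + (E′−E)·‖x‖²`; in
particular, for fixed `x ∈ F₊ \ {0}` the function `E ↦ Q(E,x)` is strictly decreasing on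
`(λ₀, ∞)`. Here `Q(E,x) = sup_{y∈F₋} (⟨x+y, A(x+y)⟩ − E‖x+y‖²)`. -/
theorem schur_complement_monotone
    {H : Type*} [NormedAddCommGroup H] [InnerProductSpace ℂ H] [CompleteSpace H]
    (A : H →ₗ.[ℂ] H)
    (hdense : Dense (A.domain : Set H))
    (hsymm : ∀ x y : A.domain, ⟪A x, (y : H)⟫ = ⟪(x : H), A y⟫)
    (P : H →L[ℂ] H)
    (hPsa : ∀ u v : H, ⟪P u, v⟫ = ⟪u, P v⟫)
    (hPidem : ∀ u : H, P (P u) = P u)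
    (hPinv : ∀ x ∈ A.domain, P x ∈ A.domain)
    (lam0 : ℝ)
    (hlam0 : ∀ y : A.domain, P (y : H) = 0 →
      (⟪(y : H), A y⟫).re ≤ lam0 * ‖(y : H)‖ ^ 2)
    (Q : ℝ → A.domain → ℝ)
    (hQ : ∀ (E : ℝ) (x : A.domain), Q E x =
      sSup {r : ℝ | ∃ y : A.domain, P (y : H) = 0 ∧
        r = (⟪(x : H) + (y : H), A (x + y)⟫).re - E * ‖(x : H) + (y : H)‖ ^ 2}) :
    (∀ E E' : ℝ, lam0 < E → E < E' → ∀ x : A.domain, P (x : H) = (x : H) →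
      Q E' x + (E' - E) * ‖(x : H)‖ ^ 2 ≤ Q E x) ∧
    (∀ x : A.domain, P (x : H) = (x : H) → (x : H) ≠ 0 →
      StrictAntiOn (fun E => Q E x) (Set.Ioi lam0)) := by
  have key : ∀ E E' : ℝ, lam0 < E → E < E' → ∀ x : A.domain, P (x : H) = (x : H) →
      Q E' x + (E' - E) * ‖(x : H)‖ ^ 2 ≤ Q E x := by
    intro E E' hE hEE' x hx
    have horth : ∀ y : A.domain, P (y : H) = 0 → ⟪(x : H), (y : H)⟫ = 0 := by
      intro y hy
      calc ⟪(x:H), (y:H)⟫ = ⟪P (x:H), (y:H)⟫ := by rw [hx]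
        _ = ⟪(x:H), P (y:H)⟫ := hPsa _ _
        _ = 0 := by rw [hy, inner_zero_right]
    have hnorm : ∀ y : A.domain, P (y : H) = 0 →
        ‖(x:H) + (y:H)‖ ^ 2 = ‖(x:H)‖ ^ 2 + ‖(y:H)‖ ^ 2 := by
      intro y hy
      rw [@norm_add_sq ℂ]
      simp [horth y hy]
    have hexp : ∀ y : A.domain,
        (⟪(x:H) + (y:H), A (x + y)⟫).re
          = (⟪(x:H), A x⟫).re + 2 * (⟪A x, (y:H)⟫).re + (⟪(y:H), A y⟫).re := by
      intro y
      have hadd : A (x + y) = A x + A y := A.map_add x y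
      have h2 : ⟪(x:H), A y⟫ = ⟪A x, (y:H)⟫ := (hsymm x y).symm
      have h3 : (⟪(y:H), A x⟫).re = (⟪A x, (y:H)⟫).re := by
        rw [← inner_conj_symm]; exact Complex.conj_re _
      rw [hadd, inner_add_left, inner_add_right, inner_add_right]
      simp only [Complex.add_re, h2, h3]
      ring
    set SE : Set ℝ := {r : ℝ | ∃ y : A.domain, P (y : H) = 0 ∧
        r = (⟪(x : H) + (y : H), A (x + y)⟫).re - E * ‖(x : H) + (y : H)‖ ^ 2} with hSE
    set SE' : Set ℝ := {r : ℝ | ∃ y : A.domain, P (y : H) = 0 ∧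
        r = (⟪(x : H) + (y : H), A (x + y)⟫).re - E' * ‖(x : H) + (y : H)‖ ^ 2} with hSE'
    have hcpos : 0 < E - lam0 := sub_pos.mpr hE
    set a := ‖A x‖ with ha
    set M := (⟪(x:H), A x⟫).re - E * ‖(x:H)‖^2 + a^2 / (E - lam0) with hM
    have hbdd : ∀ r ∈ SE, r ≤ M := by
      rintro r ⟨y, hy, rfl⟩
      have h1 := hlam0 y hy
      have h2 : (⟪A x, (y:H)⟫).re ≤ a * ‖(y:H)‖ := by
        calc (⟪A x, (y:H)⟫).re ≤ ‖⟪A x, (y:H)⟫‖ := Complex.re_le_norm _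
          _ = ‖⟪A x, (y:H)⟫‖ := rfl
          _ ≤ a * ‖(y:H)‖ := norm_inner_le_norm _ _
      have h3 : 2 * (a * ‖(y:H)‖) ≤ a^2 / (E - lam0) + (E - lam0) * ‖(y:H)‖^2 := by
        have h4 : 0 ≤ (a - (E - lam0) * ‖(y:H)‖)^2 := sq_nonneg _
        have h5 : 2 * (a * ‖(y:H)‖) * (E - lam0) ≤ a^2 + ((E - lam0) * ‖(y:H)‖)^2 := by
          nlinarith
        calc 2 * (a * ‖(y:H)‖) = (2 * (a * ‖(y:H)‖) * (E - lam0)) / (E - lam0) := by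
              field_simp
          _ ≤ (a^2 + ((E - lam0) * ‖(y:H)‖)^2) / (E - lam0) :=
              (div_le_div_iff_of_pos_right hcpos).mpr h5
          _ = a^2 / (E - lam0) + (E - lam0) * ‖(y:H)‖^2 := by
              field_simp
      rw [hexp y, hnorm y hy, hM]
      nlinarith
    have hbddAbove : BddAbove SE := ⟨M, hbdd⟩
    have hne' : SE'.Nonempty := by
      refine ⟨_, 0, ?_, rfl⟩
      simp
    rw [hQ E x, hQ E' x]
    have hle : sSup SE' ≤ sSup SE - (E' - E) * ‖(x:H)‖^2 := by
      apply csSup_le hne'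
      rintro r' ⟨y, hy, rfl⟩
      have hmem : ((⟪(x:H) + (y:H), A (x + y)⟫).re - E * ‖(x:H) + (y:H)‖^2) ∈ SE :=
        ⟨y, hy, rfl⟩
      have h1 := le_csSup hbddAbove hmem
      have h2 : ‖(x:H)‖^2 ≤ ‖(x:H) + (y:H)‖^2 := by
        rw [hnorm y hy]; exact le_add_of_nonneg_right (sq_nonneg _)
      have h3 := mul_le_mul_of_nonneg_left h2 (le_of_lt (sub_pos.mpr hEE'))
      linarith
    linarith
  refine ⟨key, ?_⟩
  intro x hx hx0 E hE E' hE' hEE'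
  have h := key E E' hE hEE' x hx
  have hpos : 0 < (E' - E) * ‖(x:H)‖^2 :=
    mul_pos (sub_pos.mpr hEE') (pow_pos (norm_pos_iff.mpr hx0) 2)
  simpa using by linarith
end

section
/- For λ₀ < E ≤ E′ and every x ∈ F₊, the quadratic forms q_E and q_{E′} satisfy the two-sided comparison q_{E′}(x) + (E′−E)·‖x‖_{E′}² ≤ q_E(x) ≤ q_{E′}(x) + (E′−E)·‖x‖_E². -/
local notation "⟪" x ", " y "⟫" => @inner ℂ _ _ x y

/-- For `λ₀ < E ≤ E′` and every `x ∈ F₊`, the Schur complement forms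
`q_E(x) = ⟨x,Ax⟩ − E‖x‖² + ⟨Λ₋(Ax), R_E(Λ₋(Ax))⟩` satisfy the two-sided comparison
`q_{E′}(x) + (E′−E)·‖x‖_{E′}² ≤ q_E(x) ≤ q_{E′}(x) + (E′−E)·‖x‖_E²`, where
`‖x‖_E² = ‖x‖² + ‖R_E(Λ₋(Ax))‖²` and the operators `R_E, R_{E′}` are bounded self-adjoint
positive commuting operators satisfying the resolvent identity and the norm bounds
`‖R_E‖ ≤ 1/(E−λ₀)`, `‖R_{E′}‖ ≤ 1/(E′−λ₀)`. -/
theorem schur_forms_comparison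
    {H : Type*} [NormedAddCommGroup H] [InnerProductSpace ℂ H] [CompleteSpace H]
    (A : H →ₗ.[ℂ] H)
    (hdense : Dense (A.domain : Set H))
    (hsymm : ∀ x y : A.domain, ⟪A x, (y : H)⟫ = ⟪(x : H), A y⟫)
    (P : H →L[ℂ] H)
    (hPsa : ∀ u v : H, ⟪P u, v⟫ = ⟪u, P v⟫)
    (hPidem : ∀ u : H, P (P u) = P u)
    (hPinv : ∀ x ∈ A.domain, P x ∈ A.domain)
    (lam0 E E' : ℝ) (hE : lam0 < E) (hEE' : E ≤ E')
    (RE RE' : H →L[ℂ] H)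
    (hREsa : ∀ u v : H, ⟪RE u, v⟫ = ⟪u, RE v⟫)
    (hRE'sa : ∀ u v : H, ⟪RE' u, v⟫ = ⟪u, RE' v⟫)
    (hREpos : ∀ u : H, 0 ≤ (⟪u, RE u⟫).re)
    (hRE'pos : ∀ u : H, 0 ≤ (⟪u, RE' u⟫).re)
    (hcomm : ∀ u : H, RE (RE' u) = RE' (RE u))
    (hres : ∀ u : H, RE u - RE' u = ((E' - E : ℝ) : ℂ) • RE (RE' u))
    (hREnorm : ‖RE‖ ≤ 1 / (E - lam0))
    (hRE'norm : ‖RE'‖ ≤ 1 / (E' - lam0)) :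
    ∀ x : A.domain, P (x : H) = (x : H) →
      ((⟪(x : H), A x⟫).re - E' * ‖(x : H)‖ ^ 2 +
          (⟪A x - P (A x), RE' (A x - P (A x))⟫).re) +
        (E' - E) * (‖(x : H)‖ ^ 2 + ‖RE' (A x - P (A x))‖ ^ 2) ≤
      (⟪(x : H), A x⟫).re - E * ‖(x : H)‖ ^ 2 +
          (⟪A x - P (A x), RE (A x - P (A x))⟫).re ∧
      (⟪(x : H), A x⟫).re - E * ‖(x : H)‖ ^ 2 +
          (⟪A x - P (A x), RE (A x - P (A x))⟫).re ≤
      ((⟪(x : H), A x⟫).re - E' * ‖(x : H)‖ ^ 2 +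
          (⟪A x - P (A x), RE' (A x - P (A x))⟫).re) +
        (E' - E) * (‖(x : H)‖ ^ 2 + ‖RE (A x - P (A x))‖ ^ 2) := by

  intro x hx
  set b : H := A x - P (A x) with hb
  have hc : (0:ℝ) ≤ E' - E := by linarith
  -- RE b = RE' b + (E'-E) • RE (RE' b)
  have hsum : RE b = RE' b + ((E' - E : ℝ) : ℂ) • RE (RE' b) := by
    have := hres b
    rw [sub_eq_iff_eq_add] at this
    rw [this]; abel
  -- key relation: re ⟪b, RE b⟫ - re ⟪b, RE' b⟫ = (E'-E) * re ⟪RE b, RE' b⟫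
  have hdiff : (⟪b, RE b⟫).re - (⟪b, RE' b⟫).re = (E' - E) * (⟪RE b, RE' b⟫).re := by
    have h1 : ⟪b, RE b⟫ - ⟪b, RE' b⟫ = ((E' - E : ℝ) : ℂ) * ⟪b, RE (RE' b)⟫ := by
      rw [← inner_sub_right, hres b, inner_smul_right]
    have h2 : ⟪RE b, RE' b⟫ = ⟪b, RE (RE' b)⟫ := hREsa b (RE' b)
    have := congrArg Complex.re h1
    simpa [h2, Complex.sub_re, Complex.mul_re] using this
  have hlow : ‖RE' b‖ ^ 2 ≤ (⟪RE b, RE' b⟫).re := by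
    have h1 : ⟪RE b, RE' b⟫ = ⟪RE' b, RE' b⟫ + ((E' - E : ℝ) : ℂ) * ⟪RE (RE' b), RE' b⟫ := by
      rw [hsum, inner_add_left, inner_smul_left]
      norm_num
    have h2 : (⟪RE (RE' b), RE' b⟫).re = (⟪RE' b, RE (RE' b)⟫).re := by
      rw [← inner_conj_symm (RE' b) (RE (RE' b))]; exact Complex.conj_re _
    have h3 : 0 ≤ (⟪RE' b, RE (RE' b)⟫).re := hREpos (RE' b)
    have h4 : (⟪RE' b, RE' b⟫).re = ‖RE' b‖ ^ 2 := by
      rw [inner_self_eq_norm_sq_to_K]; norm_cast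
    have := congrArg Complex.re h1
    simp only [Complex.add_re, Complex.mul_re, Complex.ofReal_re, Complex.ofReal_im] at this
    nlinarith [mul_nonneg hc (h2 ▸ h3)]
  have hhigh : (⟪RE b, RE' b⟫).re ≤ ‖RE b‖ ^ 2 := by
    have hsum' : RE' b = RE b - ((E' - E : ℝ) : ℂ) • RE' (RE b) := by
      have := hres b
      rw [hcomm b] at this
      rw [eq_sub_iff_add_eq, ← this]; abel
    have h1 : ⟪RE b, RE' b⟫ = ⟪RE b, RE b⟫ - ((E' - E : ℝ) : ℂ) * ⟪RE b, RE' (RE b)⟫ := by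
      rw [hsum', inner_sub_right, inner_smul_right]
    have h3 : 0 ≤ (⟪RE b, RE' (RE b)⟫).re := hRE'pos (RE b)
    have h4 : (⟪RE b, RE b⟫).re = ‖RE b‖ ^ 2 := by
      rw [inner_self_eq_norm_sq_to_K]; norm_cast
    have := congrArg Complex.re h1
    simp only [Complex.sub_re, Complex.mul_re, Complex.ofReal_re, Complex.ofReal_im] at this
    nlinarith [mul_nonneg hc h3]
  constructor
  · nlinarith [mul_le_mul_of_nonneg_left hlow hc]
  · nlinarith [mul_le_mul_of_nonneg_left hhigh hc]
end

section
/- (a) If λ₀ < E < λ₁, then for every x ∈ F₊ \ {0} one has Q(E,x) ≥ (λ₁−E)·‖x‖² > 0. (b) If E > λ₁, then for every ε with 0 < ε < E−λ₁ there exists x ∈ F₊ \ {0} such that φ_{E,x}(y) ≤ −ε‖x‖² for all y ∈ F₋; in particular Q(E,x) ≤ −ε‖x‖² < 0. -/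
local notation "⟪" x ", " y "⟫" => @inner ℂ _ _ x y

/-- (a) If `λ₀ < E < λ₁`, then for every `x ∈ F₊ \ {0}` one has
`Q(E,x) ≥ (λ₁−E)·‖x‖² > 0`. (b) If `E > λ₁`, then for every `0 < ε < E−λ₁` there exists
`x ∈ F₊ \ {0}` such that `φ_{E,x}(y) ≤ −ε‖x‖²` for all `y ∈ F₋`; in particular
`Q(E,x) ≤ −ε‖x‖² < 0`. Here `Q(E,x) = sup_{y∈F₋} φ_{E,x}(y)` with
`φ_{E,x}(y) = ⟨x+y, A(x+y)⟩ − E‖x+y‖²`. -/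
theorem schur_complement_sign
    {H : Type*} [NormedAddCommGroup H] [InnerProductSpace ℂ H] [CompleteSpace H]
    (A : H →ₗ.[ℂ] H)
    (hdense : Dense (A.domain : Set H))
    (hsymm : ∀ x y : A.domain, ⟪A x, (y : H)⟫ = ⟪(x : H), A y⟫)
    (P : H →L[ℂ] H)
    (hPsa : ∀ u v : H, ⟪P u, v⟫ = ⟪u, P v⟫)
    (hPidem : ∀ u : H, P (P u) = P u)
    (hPinv : ∀ x ∈ A.domain, P x ∈ A.domain)
    (lam0 lam1 : ℝ) (hgap : lam0 < lam1)
    (hlam0 : ∀ y : A.domain, P (y : H) = 0 →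
      (⟪(y : H), A y⟫).re ≤ lam0 * ‖(y : H)‖ ^ 2)
    (hlam1a : ∀ x : A.domain, P (x : H) = (x : H) → (x : H) ≠ 0 → ∀ ε > 0,
      ∃ y : A.domain, P (y : H) = 0 ∧
        (lam1 - ε) * ‖(x : H) + (y : H)‖ ^ 2 ≤ (⟪(x : H) + (y : H), A (x + y)⟫).re)
    (hlam1b : ∀ μ : ℝ, lam1 < μ → ∃ x : A.domain, P (x : H) = (x : H) ∧ (x : H) ≠ 0 ∧
      ∀ y : A.domain, P (y : H) = 0 →
        (⟪(x : H) + (y : H), A (x + y)⟫).re ≤ μ * ‖(x : H) + (y : H)‖ ^ 2)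
    (Q : ℝ → A.domain → ℝ)
    (hQ : ∀ (E : ℝ) (x : A.domain), Q E x =
      sSup {r : ℝ | ∃ y : A.domain, P (y : H) = 0 ∧
        r = (⟪(x : H) + (y : H), A (x + y)⟫).re - E * ‖(x : H) + (y : H)‖ ^ 2}) :
    (∀ E : ℝ, lam0 < E → E < lam1 → ∀ x : A.domain,
      P (x : H) = (x : H) → (x : H) ≠ 0 →
        (lam1 - E) * ‖(x : H)‖ ^ 2 ≤ Q E x ∧ 0 < Q E x) ∧
    (∀ E : ℝ, lam1 < E → ∀ ε : ℝ, 0 < ε → ε < E - lam1 →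
      ∃ x : A.domain, P (x : H) = (x : H) ∧ (x : H) ≠ 0 ∧
        (∀ y : A.domain, P (y : H) = 0 →
          (⟪(x : H) + (y : H), A (x + y)⟫).re - E * ‖(x : H) + (y : H)‖ ^ 2 ≤
            -ε * ‖(x : H)‖ ^ 2) ∧
        Q E x ≤ -ε * ‖(x : H)‖ ^ 2 ∧ Q E x < 0) := by
  -- orthogonality of ranges
  have horth : ∀ x y : A.domain, P (x : H) = (x : H) → P (y : H) = 0 →
      ⟪(x : H), (y : H)⟫ = 0 := by
    intro x y hx hy
    calc ⟪(x : H), (y : H)⟫ = ⟪P (x : H), (y : H)⟫ := by rw [hx]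
      _ = ⟪(x : H), P (y : H)⟫ := hPsa _ _
      _ = 0 := by rw [hy, inner_zero_right]
  have hnorm : ∀ x y : A.domain, P (x : H) = (x : H) → P (y : H) = 0 →
      ‖(x : H) + (y : H)‖ ^ 2 = ‖(x : H)‖ ^ 2 + ‖(y : H)‖ ^ 2 := by
    intro x y hx hy
    rw [norm_add_sq (𝕜 := ℂ), horth x y hx hy]
    simp
  -- expansion of the quadratic form
  have hexp : ∀ x y : A.domain,
      (⟪(x : H) + (y : H), A (x + y)⟫).re =
        (⟪(x : H), A x⟫).re + 2 * (⟪A x, (y : H)⟫).re + (⟪(y : H), A y⟫).re := by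
    intro x y
    have hadd : A (x + y) = A x + A y := A.map_add x y
    rw [hadd, inner_add_left, inner_add_right, inner_add_right]
    have h1 : (⟪(x : H), A y⟫).re = (⟪A x, (y : H)⟫).re := by rw [hsymm x y]
    have h2 : (⟪(y : H), A x⟫).re = (⟪A x, (y : H)⟫).re := by
      rw [← inner_conj_symm ((y : H))]; exact Complex.conj_re _
    simp only [Complex.add_re]
    rw [h1, h2]; ring
  -- the sup sets are nonempty and (for E > lam0, P x = x) bounded above
  have hmem : ∀ (E : ℝ) (x : A.domain),
      ((⟪(x : H) + ((0 : A.domain) : H), A (x + 0)⟫).re -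
        E * ‖(x : H) + ((0 : A.domain) : H)‖ ^ 2) ∈
      {r : ℝ | ∃ y : A.domain, P (y : H) = 0 ∧
        r = (⟪(x : H) + (y : H), A (x + y)⟫).re - E * ‖(x : H) + (y : H)‖ ^ 2} := by
    intro E x
    exact ⟨0, by simp, rfl⟩
  have hbdd : ∀ (E : ℝ), lam0 < E → ∀ x : A.domain, P (x : H) = (x : H) →
      BddAbove {r : ℝ | ∃ y : A.domain, P (y : H) = 0 ∧
        r = (⟪(x : H) + (y : H), A (x + y)⟫).re - E * ‖(x : H) + (y : H)‖ ^ 2} := by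
    intro E hE x hx
    refine ⟨(⟪(x : H), A x⟫).re - E * ‖(x : H)‖ ^ 2 + ‖A x‖ ^ 2 / (E - lam0), ?_⟩
    rintro r ⟨y, hy, rfl⟩
    rw [hexp x y, hnorm x y hx hy]
    have h1 : (⟪A x, (y : H)⟫).re ≤ ‖A x‖ * ‖(y : H)‖ := re_inner_le_norm (𝕜 := ℂ) _ _
    have h2 : (⟪(y : H), A y⟫).re ≤ lam0 * ‖(y : H)‖ ^ 2 := hlam0 y hy
    have h3 : 0 < E - lam0 := by linarith
    have h4 : 2 * (‖A x‖ * ‖(y : H)‖) - (E - lam0) * ‖(y : H)‖ ^ 2 ≤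
        ‖A x‖ ^ 2 / (E - lam0) := by
      rw [le_div_iff₀ h3]
      nlinarith [sq_nonneg (‖A x‖ - (E - lam0) * ‖(y : H)‖)]
    nlinarith [h4]
  constructor
  · -- part (a)
    intro E hE0 hE1 x hx hxne
    have hxpos : 0 < ‖(x : H)‖ ^ 2 := pow_pos (norm_pos_iff.mpr hxne) 2
    have key : (lam1 - E) * ‖(x : H)‖ ^ 2 ≤ Q E x := by
      rw [hQ]
      apply le_of_forall_pos_le_add
      intro δ hδ
      set ε := min (δ / ‖(x : H)‖ ^ 2) (lam1 - E) with hεdef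
      have hεpos : 0 < ε := lt_min (by positivity) (by linarith)
      obtain ⟨y, hy, hlb⟩ := hlam1a x hx hxne ε hεpos
      have hne : lam1 - ε - E ≥ 0 := by
        have := min_le_right (δ / ‖(x : H)‖ ^ 2) (lam1 - E); linarith
      have hmemy : ((⟪(x : H) + (y : H), A (x + y)⟫).re -
          E * ‖(x : H) + (y : H)‖ ^ 2) ∈
          {r : ℝ | ∃ y : A.domain, P (y : H) = 0 ∧
            r = (⟪(x : H) + (y : H), A (x + y)⟫).re - E * ‖(x : H) + (y : H)‖ ^ 2} :=
        ⟨y, hy, rfl⟩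
      have hle := le_csSup (hbdd E hE0 x hx) hmemy
      have hxy : ‖(x : H)‖ ^ 2 ≤ ‖(x : H) + (y : H)‖ ^ 2 := by
        rw [hnorm x y hx hy]; nlinarith [sq_nonneg ‖(y : H)‖]
      have step1 : (lam1 - ε - E) * ‖(x : H)‖ ^ 2 ≤
          (⟪(x : H) + (y : H), A (x + y)⟫).re - E * ‖(x : H) + (y : H)‖ ^ 2 := by
        have := mul_le_mul_of_nonneg_left hxy hne
        nlinarith [hlb]
      have hεδ : ε * ‖(x : H)‖ ^ 2 ≤ δ := by
        have h1 : ε ≤ δ / ‖(x : H)‖ ^ 2 := min_le_left _ _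
        calc ε * ‖(x : H)‖ ^ 2 ≤ (δ / ‖(x : H)‖ ^ 2) * ‖(x : H)‖ ^ 2 :=
              mul_le_mul_of_nonneg_right h1 (le_of_lt hxpos)
          _ = δ := by field_simp
      nlinarith [hle]
    refine ⟨key, ?_⟩
    have : 0 < (lam1 - E) * ‖(x : H)‖ ^ 2 := by
      apply mul_pos; linarith; exact hxpos
    linarith
  · -- part (b)
    intro E hE ε hε hεE
    obtain ⟨x, hx, hxne, hbound⟩ := hlam1b (E - ε) (by linarith)
    have hxpos : 0 < ‖(x : H)‖ ^ 2 := pow_pos (norm_pos_iff.mpr hxne) 2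
    have hphi : ∀ y : A.domain, P (y : H) = 0 →
        (⟪(x : H) + (y : H), A (x + y)⟫).re - E * ‖(x : H) + (y : H)‖ ^ 2 ≤
          -ε * ‖(x : H)‖ ^ 2 := by
      intro y hy
      have h1 := hbound y hy
      have hxy : ‖(x : H)‖ ^ 2 ≤ ‖(x : H) + (y : H)‖ ^ 2 := by
        rw [hnorm x y hx hy]; nlinarith [sq_nonneg ‖(y : H)‖]
      nlinarith
    have hQle : Q E x ≤ -ε * ‖(x : H)‖ ^ 2 := by
      rw [hQ]
      apply csSup_le ⟨_, hmem E x⟩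
      rintro r ⟨y, hy, rfl⟩
      exact hphi y hy
    refine ⟨x, hx, hxne, hphi, hQle, ?_⟩
    have : -ε * ‖(x : H)‖ ^ 2 < 0 := by nlinarith
    linarith
end

section
/- For fixed x ∈ F₊ \ {0}, the function E ↦ Q(E,x) is real-valued, strictly decreasing and continuous on the interval (λ₀, ∞), and Q(E,x) → −∞ as E → ∞. -/
open Filter

local notation "⟪" x ", " y "⟫" => @inner ℂ _ _ x y

/-- For fixed `x ∈ F₊ \ {0}`, the function `E ↦ Q(E,x)` (where
`Q(E,x) = sup_{y∈F₋} (⟨x+y, A(x+y)⟩ − E‖x+y‖²)`) is real-valued (the supremum is finite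
for every `E > λ₀`), strictly decreasing and continuous on `(λ₀, ∞)`, and tends to `−∞`
as `E → ∞`. -/
theorem schur_complement_strict_anti_continuous
    {H : Type*} [NormedAddCommGroup H] [InnerProductSpace ℂ H] [CompleteSpace H]
    (A : H →ₗ.[ℂ] H)
    (hdense : Dense (A.domain : Set H))
    (hsymm : ∀ x y : A.domain, ⟪A x, (y : H)⟫ = ⟪(x : H), A y⟫)
    (P : H →L[ℂ] H)
    (hPsa : ∀ u v : H, ⟪P u, v⟫ = ⟪u, P v⟫)
    (hPidem : ∀ u : H, P (P u) = P u)
    (hPinv : ∀ x ∈ A.domain, P x ∈ A.domain)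
    (lam0 : ℝ)
    (hlam0 : ∀ y : A.domain, P (y : H) = 0 →
      (⟪(y : H), A y⟫).re ≤ lam0 * ‖(y : H)‖ ^ 2)
    (SQ : ℝ → A.domain → Set ℝ)
    (hSQ : ∀ (E : ℝ) (x : A.domain), SQ E x =
      {r : ℝ | ∃ y : A.domain, P (y : H) = 0 ∧
        r = (⟪(x : H) + (y : H), A (x + y)⟫).re - E * ‖(x : H) + (y : H)‖ ^ 2})
    (Q : ℝ → A.domain → ℝ)
    (hQ : ∀ (E : ℝ) (x : A.domain), Q E x = sSup (SQ E x)) :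
    ∀ x : A.domain, P (x : H) = (x : H) → (x : H) ≠ 0 →
      (∀ E : ℝ, lam0 < E → BddAbove (SQ E x)) ∧
      StrictAntiOn (fun E => Q E x) (Set.Ioi lam0) ∧
      ContinuousOn (fun E => Q E x) (Set.Ioi lam0) ∧
      Tendsto (fun E => Q E x) atTop atBot := by
  intro x hPx hx0
  have hn0 : (0:ℝ) < ‖(x:H)‖ ^ 2 := by
    have := norm_pos_iff.2 hx0
    positivity
  set α := (⟪(x:H), A x⟫).re with hα
  set a := ‖A x‖ with ha
  set n := ‖(x:H)‖ ^ 2 with hn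
  have hmem : ∀ E r, r ∈ SQ E x ↔ ∃ y : A.domain, P (y : H) = 0 ∧
      r = (⟪(x : H) + (y : H), A (x + y)⟫).re - E * ‖(x : H) + (y : H)‖ ^ 2 := by
    intro E r; rw [hSQ]; rfl
  -- orthogonality & norm splitting
  have horth : ∀ y : A.domain, P (y:H) = 0 → ‖(x:H) + (y:H)‖ ^ 2 = n + ‖(y:H)‖ ^ 2 := by
    intro y hy
    have h1 : ⟪(x:H), (y:H)⟫ = 0 := by
      have h := hPsa (x:H) (y:H)
      rw [hPx, hy, inner_zero_right] at h
      exact h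
    have h2 := @norm_add_sq ℂ _ _ _ _ (x:H) (y:H)
    rw [h1] at h2
    simp only [map_zero, mul_zero, add_zero] at h2
    simpa [hn] using h2
  -- expansion of the quadratic form
  have hexp : ∀ y : A.domain,
      (⟪(x:H) + (y:H), A (x + y)⟫).re
        = α + 2 * (⟪(y:H), A x⟫).re + (⟪(y:H), A y⟫).re := by
    intro y
    have hadd : A (x + y) = A x + A y := A.map_add x y
    have hxy : (⟪(x:H), A y⟫).re = (⟪(y:H), A x⟫).re := by
      rw [← hsymm x y, ← inner_conj_symm]
      exact Complex.conj_re _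
    rw [hadd, inner_add_left, inner_add_right, inner_add_right]
    simp only [Complex.add_re, hxy, hα]
    ring
  have hval : ∀ (E : ℝ) (y : A.domain), P (y:H) = 0 →
      (⟪(x:H) + (y:H), A (x + y)⟫).re - E * ‖(x:H) + (y:H)‖ ^ 2
        = (α - E * n) + (2 * (⟪(y:H), A x⟫).re + (⟪(y:H), A y⟫).re - E * ‖(y:H)‖ ^ 2) := by
    intro E y hy
    rw [hexp y, horth y hy]; ring
  -- bound on the remainder
  have hrest : ∀ E : ℝ, lam0 < E → ∀ y : A.domain, P (y:H) = 0 →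
      2 * (⟪(y:H), A x⟫).re + (⟪(y:H), A y⟫).re - E * ‖(y:H)‖ ^ 2 ≤ a ^ 2 / (E - lam0) := by
    intro E hE y hy
    have hc : 0 < E - lam0 := sub_pos.2 hE
    have h1 : (⟪(y:H), A x⟫).re ≤ ‖(y:H)‖ * a := by
      calc (⟪(y:H), A x⟫).re ≤ ‖⟪(y:H), A x⟫‖ := Complex.re_le_norm _
        _ ≤ ‖(y:H)‖ * ‖A x‖ := norm_inner_le_norm _ _
    have h2 := hlam0 y hy
    have h3 : 2 * (‖(y:H)‖ * a) - (E - lam0) * ‖(y:H)‖ ^ 2 ≤ a ^ 2 / (E - lam0) := by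
      rw [le_div_iff₀ hc]
      nlinarith [sq_nonneg ((E - lam0) * ‖(y:H)‖ - a)]
    nlinarith
  have hub : ∀ E : ℝ, lam0 < E → ∀ r ∈ SQ E x, r ≤ (α - E * n) + a ^ 2 / (E - lam0) := by
    intro E hE r hr
    obtain ⟨y, hy, rfl⟩ := (hmem E r).1 hr
    rw [hval E y hy]
    exact add_le_add (le_refl _) (hrest E hE y hy)
  have hbdd : ∀ E : ℝ, lam0 < E → BddAbove (SQ E x) := by
    intro E hE
    exact ⟨(α - E * n) + a ^ 2 / (E - lam0), fun r hr => hub E hE r hr⟩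
  have hne : ∀ E : ℝ, (α - E * n) ∈ SQ E x := by
    intro E
    rw [hmem]
    refine ⟨0, by simp, ?_⟩
    simp [hα, hn]
  -- comparison estimate
  have hcomp : ∀ E₁ E₂ : ℝ, lam0 < E₁ → E₁ < E₂ → Q E₂ x ≤ Q E₁ x - (E₂ - E₁) * n := by
    intro E₁ E₂ h1 h2
    rw [hQ]
    apply csSup_le ⟨_, hne E₂⟩
    intro r hr
    obtain ⟨y, hy, rfl⟩ := (hmem E₂ r).1 hr
    have hmem1 : (⟪(x:H) + (y:H), A (x + y)⟫).re - E₁ * ‖(x:H) + (y:H)‖ ^ 2 ∈ SQ E₁ x :=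
      (hmem E₁ _).2 ⟨y, hy, rfl⟩
    have hle : (⟪(x:H) + (y:H), A (x + y)⟫).re - E₁ * ‖(x:H) + (y:H)‖ ^ 2 ≤ Q E₁ x := by
      rw [hQ]; exact le_csSup (hbdd E₁ h1) hmem1
    have hnorm : n ≤ ‖(x:H) + (y:H)‖ ^ 2 := by
      rw [horth y hy]; nlinarith [sq_nonneg ‖(y:H)‖]
    nlinarith
  have hanti : StrictAntiOn (fun E => Q E x) (Set.Ioi lam0) := by
    intro E₁ hE₁ E₂ hE₂ h12
    have := hcomp E₁ E₂ hE₁ h12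
    have hpos : 0 < (E₂ - E₁) * n := by
      apply mul_pos (by linarith) hn0
    simp only
    linarith
  have hconv : ConvexOn ℝ (Set.Ioi lam0) (fun E => Q E x) := by
    refine ⟨convex_Ioi _, ?_⟩
    intro E₁ hE₁ E₂ hE₂ p q hp hq hpq
    simp only
    rw [hQ]
    apply csSup_le ⟨_, hne _⟩
    intro r hr
    obtain ⟨y, hy, rfl⟩ := (hmem _ r).1 hr
    set c := (⟪(x:H) + (y:H), A (x + y)⟫).re with hc
    set m := ‖(x:H) + (y:H)‖ ^ 2 with hm
    have l1 : c - E₁ * m ≤ Q E₁ x := by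
      rw [hQ]; exact le_csSup (hbdd E₁ hE₁) ((hmem E₁ _).2 ⟨y, hy, rfl⟩)
    have l2 : c - E₂ * m ≤ Q E₂ x := by
      rw [hQ]; exact le_csSup (hbdd E₂ hE₂) ((hmem E₂ _).2 ⟨y, hy, rfl⟩)
    have key : c - (p * E₁ + q * E₂) * m = p * (c - E₁ * m) + q * (c - E₂ * m) := by
      have : p * c + q * c = c := by rw [← add_mul, hpq, one_mul]
      nlinarith [this]
    simp only [smul_eq_mul]
    rw [key]
    have := mul_le_mul_of_nonneg_left l1 hp
    have := mul_le_mul_of_nonneg_left l2 hq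
    linarith
  have hcont : ContinuousOn (fun E => Q E x) (Set.Ioi lam0) :=
    hconv.continuousOn isOpen_Ioi
  have hub2 : ∀ E ≥ lam0 + 1, Q E x ≤ (α + a ^ 2) - E * n := by
    intro E hE
    have hE' : lam0 < E := by linarith
    rw [hQ]
    apply csSup_le ⟨_, hne E⟩
    intro r hr
    have h1 := hub E hE' r hr
    have hd : a ^ 2 / (E - lam0) ≤ a ^ 2 :=
      div_le_self (sq_nonneg a) (by linarith)
    linarith
  have htop : Tendsto (fun E : ℝ => (α + a ^ 2) - E * n) atTop atBot := by
    have h1 : Tendsto (fun E : ℝ => E * n) atTop atTop :=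
      Tendsto.atTop_mul_const hn0 tendsto_id
    have h2 : Tendsto (fun E : ℝ => -(E * n)) atTop atBot :=
      tendsto_neg_atTop_atBot.comp h1
    have h3 := tendsto_atBot_add_const_left atTop (α + a ^ 2) h2
    simpa [sub_eq_add_neg] using h3
  refine ⟨hbdd, hanti, hcont, ?_⟩
  exact tendsto_atBot_mono' atTop (eventually_atTop.2 ⟨lam0 + 1, hub2⟩) htop
end

section
/- For every x ∈ F₊ \ {0}, the quantity E(x) := sup_{z ∈ (span(x) ⊕ F₋) \ {0}} ⟨z, Az⟩/‖z‖² is finite, satisfies E(x) ≥ λ₁, equals sup_{y∈F₋} ⟨x+y, A(x+y)⟩/‖x+y‖², and is the unique number E ∈ (λ₀, ∞) such that Q(E,x) = 0. -/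
local notation "⟪" x ", " y "⟫" => @inner ℂ _ _ x y

private lemma aux_quad {α t b C : ℝ} (hα : 0 < α) (ht : 0 ≤ t) (hb : 0 ≤ b) (hC : 0 ≤ C)
    (h : α * t ^ 2 ≤ C + 2 * b * t) : t ^ 2 ≤ 2 * C / α + 4 * b ^ 2 / α ^ 2 := by
  have h2 : α ^ 2 * t ^ 2 ≤ 2 * C * α + 4 * b ^ 2 := by
    nlinarith [sq_nonneg (α * t - 2 * b), mul_le_mul_of_nonneg_left h hα.le]
  have e1 : 2 * C / α + 4 * b ^ 2 / α ^ 2 = (2 * C * α + 4 * b ^ 2) / α ^ 2 := by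
    field_simp
  rw [e1, le_div_iff₀ (by positivity)]
  nlinarith [h2]

private lemma aux_div {E K a n nx : ℝ} (hn : 0 < n) (hnx : 0 < nx) (hxle : nx ≤ n)
    (h : a - E * n ≤ K) : a / n ≤ E + max K 0 / nx := by
  rw [div_le_iff₀ hn]
  have h2 : K ≤ max K 0 := le_max_left _ _
  have h3 : max K 0 / nx * nx ≤ max K 0 / nx * n :=
    mul_le_mul_of_nonneg_left hxle (by positivity)
  have hqx : max K 0 / nx * nx = max K 0 := div_mul_cancel₀ _ (ne_of_gt hnx)
  nlinarith

/-- For every `x ∈ F₊ \ {0}`, the quantity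
`E(x) = sup_{z ∈ (span(x) ⊕ F₋) \ {0}} ⟨z,Az⟩/‖z‖²` is finite (the set is bounded above),
satisfies `E(x) ≥ λ₁`, equals `sup_{y∈F₋} ⟨x+y, A(x+y)⟩/‖x+y‖²`, and is the unique number
`E ∈ (λ₀,∞)` with `Q(E,x) = 0`, where `Q(E,x) = sup_{y∈F₋} (⟨x+y,A(x+y)⟩ − E‖x+y‖²)`. -/
theorem unique_zero_of_schur_complement
    {H : Type*} [NormedAddCommGroup H] [InnerProductSpace ℂ H] [CompleteSpace H]
    (A : H →ₗ.[ℂ] H)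
    (hdense : Dense (A.domain : Set H))
    (hsymm : ∀ x y : A.domain, ⟪A x, (y : H)⟫ = ⟪(x : H), A y⟫)
    (P : H →L[ℂ] H)
    (hPsa : ∀ u v : H, ⟪P u, v⟫ = ⟪u, P v⟫)
    (hPidem : ∀ u : H, P (P u) = P u)
    (hPinv : ∀ x ∈ A.domain, P x ∈ A.domain)
    (lam0 lam1 : ℝ) (hgap : lam0 < lam1)
    (hlam0 : ∀ y : A.domain, P (y : H) = 0 →
      (⟪(y : H), A y⟫).re ≤ lam0 * ‖(y : H)‖ ^ 2)
    (hlam1a : ∀ x : A.domain, P (x : H) = (x : H) → (x : H) ≠ 0 → ∀ ε > 0,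
      ∃ y : A.domain, P (y : H) = 0 ∧
        (lam1 - ε) * ‖(x : H) + (y : H)‖ ^ 2 ≤ (⟪(x : H) + (y : H), A (x + y)⟫).re)
    (hlam1b : ∀ μ : ℝ, lam1 < μ → ∃ x : A.domain, P (x : H) = (x : H) ∧ (x : H) ≠ 0 ∧
      ∀ y : A.domain, P (y : H) = 0 →
        (⟪(x : H) + (y : H), A (x + y)⟫).re ≤ μ * ‖(x : H) + (y : H)‖ ^ 2)
    (Q : ℝ → A.domain → ℝ)
    (hQ : ∀ (E : ℝ) (x : A.domain), Q E x =
      sSup {r : ℝ | ∃ y : A.domain, P (y : H) = 0 ∧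
        r = (⟪(x : H) + (y : H), A (x + y)⟫).re - E * ‖(x : H) + (y : H)‖ ^ 2})
    (TE : A.domain → Set ℝ)
    (hTE : ∀ x : A.domain, TE x = {r : ℝ | ∃ (c : ℂ) (y : A.domain), P (y : H) = 0 ∧
      c • (x : H) + (y : H) ≠ 0 ∧
      r = (⟪c • (x : H) + (y : H), A (c • x + y)⟫).re / ‖c • (x : H) + (y : H)‖ ^ 2})
    (T2 : A.domain → Set ℝ)
    (hT2 : ∀ x : A.domain, T2 x = {r : ℝ | ∃ y : A.domain, P (y : H) = 0 ∧
      r = (⟪(x : H) + (y : H), A (x + y)⟫).re / ‖(x : H) + (y : H)‖ ^ 2}) :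
    ∀ x : A.domain, P (x : H) = (x : H) → (x : H) ≠ 0 →
      BddAbove (TE x) ∧
      lam1 ≤ sSup (TE x) ∧
      sSup (TE x) = sSup (T2 x) ∧
      lam0 < sSup (TE x) ∧
      Q (sSup (TE x)) x = 0 ∧
      ∀ E : ℝ, lam0 < E → Q E x = 0 → E = sSup (TE x) := by
  intro x hPx hx
  have hxpos : (0:ℝ) < ‖(x:H)‖ ^ 2 := by
    have : (0:ℝ) < ‖(x:H)‖ := norm_pos_iff.mpr hx
    positivity
  -- orthogonality
  have horth : ∀ y : A.domain, P (y : H) = 0 → ⟪(x:H), (y:H)⟫ = 0 := by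
    intro y hy
    have h := hPsa (x : H) (y : H)
    rw [hPx, hy] at h
    simpa using h
  have hnorm : ∀ y : A.domain, P (y : H) = 0 →
      ‖(x:H) + (y:H)‖ ^ 2 = ‖(x:H)‖ ^ 2 + ‖(y:H)‖ ^ 2 := by
    intro y hy
    have := norm_add_sq_eq_norm_sq_add_norm_sq_of_inner_eq_zero (x:H) (y:H) (horth y hy)
    rw [pow_two, pow_two, pow_two]
    exact this
  have hnpos : ∀ y : A.domain, P (y : H) = 0 → (0:ℝ) < ‖(x:H) + (y:H)‖ ^ 2 := by
    intro y hy
    rw [hnorm y hy]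
    nlinarith [sq_nonneg ‖(y:H)‖]
  -- expansion of the quadratic form
  have hexp : ∀ y : A.domain,
      (⟪(x:H) + (y:H), A (x + y)⟫).re =
        (⟪(x:H), A x⟫).re + 2 * (⟪A x, (y:H)⟫).re + (⟪(y:H), A y⟫).re := by
    intro y
    have hadd : A (x + y) = A x + A y := A.map_add x y
    have h1 : ⟪(x:H) + (y:H), A (x + y)⟫ =
        ⟪(x:H), A x⟫ + ⟪(x:H), A y⟫ + ⟪(y:H), A x⟫ + ⟪(y:H), A y⟫ := by
      rw [hadd, inner_add_left, inner_add_right, inner_add_right]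
      ring
    have h2 : ⟪(x:H), A y⟫ = ⟪A x, (y:H)⟫ := (hsymm x y).symm
    have h3 : (⟪(y:H), A x⟫).re = (⟪A x, (y:H)⟫).re := by
      rw [← inner_conj_symm (A x : H) (y : H)]
      exact Complex.conj_re _
    rw [h1]
    simp only [Complex.add_re, h2, h3]
    ring
  have hcs : ∀ y : A.domain, (⟪A x, (y:H)⟫).re ≤ ‖(A x : H)‖ * ‖(y:H)‖ := by
    intro y
    have := re_inner_le_norm (𝕜 := ℂ) (A x : H) (y : H)
    simpa using this
  -- uniform upper bound for the shifted form
  have hKE : ∀ E : ℝ, lam0 < E → ∀ y : A.domain, P (y : H) = 0 →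
      (⟪(x:H) + (y:H), A (x + y)⟫).re - E * ‖(x:H) + (y:H)‖ ^ 2 ≤
        (⟪(x:H), A x⟫).re - E * ‖(x:H)‖ ^ 2 + ‖(A x : H)‖ ^ 2 / (E - lam0) := by
    intro E hE y hy
    rw [hexp y, hnorm y hy]
    have h1 := hlam0 y hy
    have h2 := hcs y
    have hα : (0:ℝ) < E - lam0 := sub_pos.mpr hE
    have hD : (E - lam0) * (‖(A x : H)‖ ^ 2 / (E - lam0)) = ‖(A x : H)‖ ^ 2 := by
      field_simp
    nlinarith [sq_nonneg ((E - lam0) * ‖(y:H)‖ - ‖(A x : H)‖), norm_nonneg (y:H),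
      norm_nonneg (A x : H), mul_pos hα hα]
  -- basic facts about the sets S E
  have hSne : ∀ E : ℝ,
      Set.Nonempty {r : ℝ | ∃ y : A.domain, P (y : H) = 0 ∧
        r = (⟪(x : H) + (y : H), A (x + y)⟫).re - E * ‖(x : H) + (y : H)‖ ^ 2} := by
    intro E
    exact ⟨_, ⟨0, by simp, rfl⟩⟩
  have hSbdd : ∀ E : ℝ, lam0 < E →
      BddAbove {r : ℝ | ∃ y : A.domain, P (y : H) = 0 ∧
        r = (⟪(x : H) + (y : H), A (x + y)⟫).re - E * ‖(x : H) + (y : H)‖ ^ 2} := by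
    intro E hE
    refine ⟨(⟪(x:H), A x⟫).re - E * ‖(x:H)‖ ^ 2 + ‖(A x : H)‖ ^ 2 / (E - lam0), ?_⟩
    rintro r ⟨y, hy, rfl⟩
    exact hKE E hE y hy
  -- T2 facts
  have hT2mem : ∀ y : A.domain, P (y : H) = 0 →
      (⟪(x : H) + (y : H), A (x + y)⟫).re / ‖(x : H) + (y : H)‖ ^ 2 ∈ T2 x := by
    intro y hy
    rw [hT2]
    exact ⟨y, hy, rfl⟩
  have hT2ne : (T2 x).Nonempty := ⟨_, hT2mem 0 (by simp)⟩
  have hnxle : ∀ y : A.domain, P (y : H) = 0 →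
      ‖(x:H)‖ ^ 2 ≤ ‖(x:H) + (y:H)‖ ^ 2 := by
    intro y hy
    rw [hnorm y hy]
    nlinarith [sq_nonneg ‖(y:H)‖]
  have hT2bdd : BddAbove (T2 x) := by
    refine ⟨lam0 + 1 + max ((⟪(x:H), A x⟫).re - (lam0 + 1) * ‖(x:H)‖ ^ 2 +
      ‖(A x : H)‖ ^ 2 / (lam0 + 1 - lam0)) 0 / ‖(x:H)‖ ^ 2, ?_⟩
    rw [hT2]
    rintro r ⟨y, hy, rfl⟩
    exact aux_div (hnpos y hy) hxpos (hnxle y hy) (hKE (lam0 + 1) (by linarith) y hy)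
  -- lam1 ≤ sSup (T2 x)
  have hlam1le : lam1 ≤ sSup (T2 x) := by
    by_contra hcon
    push_neg at hcon
    obtain ⟨y, hy, hle⟩ := hlam1a x hPx hx ((lam1 - sSup (T2 x)) / 2) (by linarith)
    have hn := hnpos y hy
    have hr : lam1 - (lam1 - sSup (T2 x)) / 2 ≤
        (⟪(x : H) + (y : H), A (x + y)⟫).re / ‖(x : H) + (y : H)‖ ^ 2 :=
      (le_div_iff₀ hn).mpr hle
    have := le_csSup hT2bdd (hT2mem y hy)
    linarith
  have hlt0 : lam0 < sSup (T2 x) := lt_of_lt_of_le hgap hlam1le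
  -- Q (sSup T2) x ≤ 0
  have hQle : Q (sSup (T2 x)) x ≤ 0 := by
    rw [hQ]
    apply csSup_le (hSne _)
    rintro r ⟨y, hy, rfl⟩
    have h := le_csSup hT2bdd (hT2mem y hy)
    have hn := hnpos y hy
    have := (div_le_iff₀ hn).mp h
    linarith
  -- Q (sSup T2) x ≥ 0
  have hQge : 0 ≤ Q (sSup (T2 x)) x := by
    obtain ⟨E0, hE0gt, hE0lt⟩ : ∃ E0, lam0 < E0 ∧ E0 < sSup (T2 x) :=
      ⟨(lam0 + sSup (T2 x)) / 2, by linarith, by linarith⟩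
    obtain ⟨M, hM0, hMy⟩ : ∃ M : ℝ, 0 ≤ M ∧ ∀ y : A.domain, P (y : H) = 0 →
        0 ≤ (⟪(x:H) + (y:H), A (x + y)⟫).re - E0 * ‖(x:H) + (y:H)‖ ^ 2 →
        ‖(x:H) + (y:H)‖ ^ 2 ≤ M := by
      have hα : (0:ℝ) < E0 - lam0 := sub_pos.mpr hE0gt
      refine ⟨‖(x:H)‖ ^ 2 + 2 * |(⟪(x:H), A x⟫).re - E0 * ‖(x:H)‖ ^ 2| / (E0 - lam0) +
        4 * ‖(A x : H)‖ ^ 2 / (E0 - lam0) ^ 2, by positivity, ?_⟩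
      intro y hy hpos
      rw [hexp y, hnorm y hy] at hpos
      rw [hnorm y hy]
      have h1 := hlam0 y hy
      have h2 := hcs y
      have habs : (⟪(x:H), A x⟫).re - E0 * ‖(x:H)‖ ^ 2 ≤
          |(⟪(x:H), A x⟫).re - E0 * ‖(x:H)‖ ^ 2| := le_abs_self _
      have hkey : (E0 - lam0) * ‖(y:H)‖ ^ 2 ≤
          |(⟪(x:H), A x⟫).re - E0 * ‖(x:H)‖ ^ 2| + 2 * ‖(A x : H)‖ * ‖(y:H)‖ := by
        nlinarith [hpos, h1, h2, habs]
      have := aux_quad hα (norm_nonneg (y:H)) (norm_nonneg (A x : H)) (abs_nonneg _) hkey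
      linarith
    have key : ∀ ε : ℝ, 0 < ε → -ε ≤ Q (sSup (T2 x)) x := by
      intro ε hε
      have hMpos : (0:ℝ) < M + 1 := by linarith
      obtain ⟨E', hE'ge, hE'lt, hgap2⟩ : ∃ E', E0 ≤ E' ∧ E' < sSup (T2 x) ∧
          sSup (T2 x) - E' ≤ ε / (M + 1) := by
        refine ⟨max E0 (sSup (T2 x) - ε / (M + 1)), le_max_left _ _, ?_, ?_⟩
        · exact max_lt hE0lt (by nlinarith [div_pos hε hMpos])
        · have := le_max_right E0 (sSup (T2 x) - ε / (M + 1))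
          linarith
      obtain ⟨r, hrmem, hrlt⟩ := exists_lt_of_lt_csSup hT2ne hE'lt
      rw [hT2] at hrmem
      obtain ⟨y, hy, rfl⟩ := hrmem
      have hn := hnpos y hy
      have hay : E' * ‖(x:H) + (y:H)‖ ^ 2 < (⟪(x:H) + (y:H), A (x + y)⟫).re := by
        have := (lt_div_iff₀ hn).mp hrlt
        linarith
      have hpos0 : 0 ≤ (⟪(x:H) + (y:H), A (x + y)⟫).re - E0 * ‖(x:H) + (y:H)‖ ^ 2 := by
        have := mul_le_mul_of_nonneg_right hE'ge hn.le
        linarith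
      have hnM := hMy y hy hpos0
      have hQb : (⟪(x:H) + (y:H), A (x + y)⟫).re -
          sSup (T2 x) * ‖(x:H) + (y:H)‖ ^ 2 ≤ Q (sSup (T2 x)) x := by
        rw [hQ]
        exact le_csSup (hSbdd (sSup (T2 x)) hlt0) ⟨y, hy, rfl⟩
      have h1 : (sSup (T2 x) - E') * ‖(x:H) + (y:H)‖ ^ 2 ≤ ε / (M + 1) * M :=
        mul_le_mul hgap2 hnM hn.le (by positivity)
      have h2 : ε / (M + 1) * M ≤ ε := by
        rw [div_mul_eq_mul_div, div_le_iff₀ hMpos]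
        nlinarith
      linarith
    by_contra hcon
    push_neg at hcon
    have := key (-(Q (sSup (T2 x)) x) / 2) (by linarith)
    linarith
  have hQzero : Q (sSup (T2 x)) x = 0 := le_antisymm hQle hQge
  -- strict decrease of Q
  have hdec : ∀ E E' : ℝ, lam0 < E → E < E' →
      Q E' x ≤ Q E x - (E' - E) * ‖(x:H)‖ ^ 2 := by
    intro E E' hE hEE'
    rw [hQ E' x]
    apply csSup_le (hSne E')
    rintro r ⟨y, hy, rfl⟩
    have h1 : (⟪(x:H) + (y:H), A (x + y)⟫).re - E * ‖(x:H) + (y:H)‖ ^ 2 ≤ Q E x := by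
      rw [hQ]
      exact le_csSup (hSbdd E hE) ⟨y, hy, rfl⟩
    have h2 := hnxle y hy
    nlinarith
  -- TE facts
  have hT2subTE : T2 x ⊆ TE x := by
    rw [hT2, hTE]
    rintro r ⟨y, hy, rfl⟩
    refine ⟨1, y, hy, ?_, ?_⟩
    · rw [one_smul]
      intro h
      have hn := hnpos y hy
      rw [h] at hn
      simp at hn
    · rw [one_smul, one_smul]
  have hTEub : ∀ r ∈ TE x, r ≤ sSup (T2 x) := by
    rw [hTE]
    rintro r ⟨c, y, hy, hz, rfl⟩
    by_cases hc : c = 0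
    · subst hc
      simp only [zero_smul, zero_add] at hz ⊢
      have hypos : (0:ℝ) < ‖(y:H)‖ ^ 2 := by
        have : (0:ℝ) < ‖(y:H)‖ := norm_pos_iff.mpr hz
        positivity
      have : (⟪(y:H), A y⟫).re / ‖(y:H)‖ ^ 2 ≤ lam0 := by
        rw [div_le_iff₀ hypos]
        exact hlam0 y hy
      linarith [hlt0]
    · -- rescale: c • x + y = c • (x + c⁻¹ • y)
      set y' : A.domain := c⁻¹ • y with hy'def
      have hy' : P (y' : H) = 0 := by
        have : (y' : H) = c⁻¹ • (y : H) := rfl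
        rw [this, map_smul, hy, smul_zero]
      have hz1 : (c • x + y : A.domain) = c • (x + y') := by
        rw [hy'def, smul_add, smul_inv_smul₀ hc]
      have hz2 : c • (x:H) + (y:H) = c • ((x:H) + (y':H)) := by
        have : (y' : H) = c⁻¹ • (y : H) := rfl
        rw [this, smul_add, smul_inv_smul₀ hc]
      have hAz : (A (c • x + y) : H) = c • (A (x + y') : H) := by
        rw [hz1, A.map_smul]
      have hinner : (⟪c • (x:H) + (y:H), A (c • x + y)⟫).re =
          ‖c‖ ^ 2 * (⟪(x:H) + (y':H), A (x + y')⟫).re := by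
        rw [hz2, hAz, inner_smul_left, inner_smul_right, ← mul_assoc,
          ← Complex.normSq_eq_conj_mul_self, Complex.re_ofReal_mul,
          Complex.normSq_eq_norm_sq]
      have hnormsq : ‖c • (x:H) + (y:H)‖ ^ 2 = ‖c‖ ^ 2 * ‖(x:H) + (y':H)‖ ^ 2 := by
        rw [hz2, norm_smul, mul_pow]
      have hcpos : (0:ℝ) < ‖c‖ ^ 2 := by
        have : (0:ℝ) < ‖c‖ := norm_pos_iff.mpr hc
        positivity
      have heq : (⟪c • (x:H) + (y:H), A (c • x + y)⟫).re / ‖c • (x:H) + (y:H)‖ ^ 2 =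
          (⟪(x:H) + (y':H), A (x + y')⟫).re / ‖(x:H) + (y':H)‖ ^ 2 := by
        rw [hinner, hnormsq, mul_div_mul_left _ _ (ne_of_gt hcpos)]
      rw [heq]
      exact le_csSup hT2bdd (hT2mem y' hy')
  have hTEbdd : BddAbove (TE x) := ⟨sSup (T2 x), fun r hr => hTEub r hr⟩
  have hTEne : (TE x).Nonempty := hT2ne.mono hT2subTE
  have hTEeq : sSup (TE x) = sSup (T2 x) :=
    le_antisymm (csSup_le hTEne hTEub) (csSup_le_csSup hTEbdd hT2ne hT2subTE)
  refine ⟨hTEbdd, ?_, hTEeq, ?_, ?_, ?_⟩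
  · rw [hTEeq]; exact hlam1le
  · rw [hTEeq]; exact hlt0
  · rw [hTEeq]; exact hQzero
  · intro E hE hQE
    rw [hTEeq]
    rcases lt_trichotomy E (sSup (T2 x)) with h | h | h
    · exfalso
      have := hdec E (sSup (T2 x)) hE h
      rw [hQE, hQzero] at this
      nlinarith
    · exact h
    · exfalso
      have := hdec (sSup (T2 x)) E hlt0 h
      rw [hQE, hQzero] at this
      nlinarith
end

section
/- Assume the Hardy-type inequality of Dolbeault–Esteban–Loss–Vega: for every ψ ∈ C_c^∞(ℝ³; ℂ²), ∫_{ℝ³} |(σ·∇ψ)(x)|²/(1 + 1/|x|) dx + ∫_{ℝ³} (1 − 1/|x|)·|ψ(x)|² dx ≥ 0. Then for every ν ∈ [0,1] and every ψ ∈ C_c^∞(ℝ³; ℂ²): ∫_{ℝ³} |(σ·∇ψ)(x)|²/(1 + ν/|x|) dx + ∫_{ℝ³} (1 − ν/|x|)·|ψ(x)|² dx ≥ 0; that is, the Schur complement form q₀ of the Dirac–Coulomb operator H_ν in the Talman decomposition is nonnegative for all ν ∈ [0,1]. -/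
open MeasureTheory

/-- The three Pauli matrices acting on `ℂ²`. -/
noncomputable def pauli : Fin 3 → Matrix (Fin 2) (Fin 2) ℂ :=
  ![!![0, 1; 1, 0], !![0, -Complex.I; Complex.I, 0], !![1, 0; 0, -1]]

/-- `(σ·∇ψ)(x) = Σᵢ σⁱ (∂ᵢψ)(x)` for `ψ : ℝ³ → ℂ²`. -/
noncomputable def sigmaGrad (ψ : EuclideanSpace ℝ (Fin 3) → EuclideanSpace ℂ (Fin 2))
    (x : EuclideanSpace ℝ (Fin 3)) : EuclideanSpace ℂ (Fin 2) :=
  (WithLp.equiv 2 (Fin 2 → ℂ)).symm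
    (∑ i : Fin 3, (pauli i).mulVec
      ((WithLp.equiv 2 (Fin 2 → ℂ)) (fderiv ℝ ψ x (EuclideanSpace.single i (1 : ℝ)))))


/-- Chain rule for `sigmaGrad` under the scaling `x ↦ ν • x`. -/
lemma sigmaGrad_comp_smul (ψ : EuclideanSpace ℝ (Fin 3) → EuclideanSpace ℂ (Fin 2))
    (hψ : ContDiff ℝ (⊤ : ℕ∞) ψ) (ν : ℝ) (x : EuclideanSpace ℝ (Fin 3)) :
    sigmaGrad (fun y => ψ (ν • y)) x = ν • sigmaGrad ψ (ν • x) := by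
  set L := ν • ContinuousLinearMap.id ℝ (EuclideanSpace ℝ (Fin 3)) with hLdef
  have hL : (fun y : EuclideanSpace ℝ (Fin 3) => ψ (ν • y)) = ψ ∘ ⇑L := by
    ext y; simp [hLdef]
  have hd : fderiv ℝ (fun y => ψ (ν • y)) x = (fderiv ℝ ψ (ν • x)).comp L := by
    rw [hL, fderiv_comp x (hψ.differentiable (by simp) _) L.differentiableAt,
      L.fderiv]
    simp [hLdef]
  have hmv : ∀ i (w : Fin 2 → ℂ), (pauli i).mulVec (ν • w) = ν • (pauli i).mulVec w := by
    intro i w; funext j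
    simp [Matrix.mulVec, dotProduct, Finset.smul_sum, mul_smul_comm]
    fin_cases j <;> simp <;> ring
  simp only [sigmaGrad, hd, ContinuousLinearMap.coe_comp', Function.comp_apply, hLdef,
    ContinuousLinearMap.smul_apply, ContinuousLinearMap.coe_id', id_eq, _root_.map_smul,
    WithLp.equiv_apply, WithLp.ofLp_smul, hmv, ← Finset.smul_sum, WithLp.equiv_symm_apply,
    WithLp.toLp_smul]

/-- Assuming the Hardy-type inequality of Dolbeault–Esteban–Loss–Vega
(`∫ |σ·∇ψ|²/(1 + 1/|x|) + ∫ (1 − 1/|x|)|ψ|² ≥ 0` for all `ψ ∈ C_c^∞(ℝ³;ℂ²)`), the Schur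
complement form `q₀` of the Dirac–Coulomb operator `H_ν` in the Talman decomposition is
nonnegative for every `ν ∈ [0,1]`:
`∫ |σ·∇ψ|²/(1 + ν/|x|) + ∫ (1 − ν/|x|)|ψ|² ≥ 0` for all `ψ ∈ C_c^∞(ℝ³;ℂ²)`. -/
theorem hardy_dirac_coulomb_all_nu
    (hHardy : ∀ ψ : EuclideanSpace ℝ (Fin 3) → EuclideanSpace ℂ (Fin 2),
      ContDiff ℝ (⊤ : ℕ∞) ψ → HasCompactSupport ψ →
      0 ≤ (∫ x : EuclideanSpace ℝ (Fin 3), ‖sigmaGrad ψ x‖ ^ 2 / (1 + 1 / ‖x‖)) +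
          ∫ x : EuclideanSpace ℝ (Fin 3), (1 - 1 / ‖x‖) * ‖ψ x‖ ^ 2)
    (ν : ℝ) (hν0 : 0 ≤ ν) (hν1 : ν ≤ 1)
    (ψ : EuclideanSpace ℝ (Fin 3) → EuclideanSpace ℂ (Fin 2))
    (hψ : ContDiff ℝ (⊤ : ℕ∞) ψ) (hsupp : HasCompactSupport ψ) :
    0 ≤ (∫ x : EuclideanSpace ℝ (Fin 3), ‖sigmaGrad ψ x‖ ^ 2 / (1 + ν / ‖x‖)) +
        ∫ x : EuclideanSpace ℝ (Fin 3), (1 - ν / ‖x‖) * ‖ψ x‖ ^ 2 := by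
  rcases hν0.eq_or_lt with h0 | hν
  · simp only [← h0, zero_div, add_zero, div_one, zero_mul, sub_zero, one_mul]
    exact add_nonneg (integral_nonneg fun x => by positivity)
      (integral_nonneg fun x => by positivity)
  -- ν > 0 case, via scaling
  set φ : EuclideanSpace ℝ (Fin 3) → EuclideanSpace ℂ (Fin 2) := fun y => ψ (ν • y) with hφdef
  have hφc : ContDiff ℝ (⊤ : ℕ∞) φ :=
    hψ.comp (contDiff_id.const_smul ν)
  have hφs : HasCompactSupport φ := hsupp.comp_smul hν.ne'
  have hnorm : ∀ y : EuclideanSpace ℝ (Fin 3), ‖ν • y‖ = ν * ‖y‖ := fun y => by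
    rw [norm_smul, Real.norm_of_nonneg hν.le]
  have hdivν : ∀ y : EuclideanSpace ℝ (Fin 3), (1 : ℝ) / ‖y‖ = ν / ‖ν • y‖ := by
    intro y
    rcases eq_or_ne ‖y‖ 0 with h | h
    · simp [hnorm, h]
    · rw [hnorm]; field_simp
  -- pointwise identities
  have hpt1 : ∀ x : EuclideanSpace ℝ (Fin 3),
      ‖sigmaGrad φ x‖ ^ 2 / (1 + 1 / ‖x‖) =
      (fun y : EuclideanSpace ℝ (Fin 3) =>
        ν ^ 2 * (‖sigmaGrad ψ y‖ ^ 2 / (1 + ν / ‖y‖))) (ν • x) := by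
    intro x
    simp only [hφdef]
    rw [sigmaGrad_comp_smul ψ hψ ν x, norm_smul, Real.norm_of_nonneg hν.le,
      hdivν x, mul_pow, mul_div_assoc]
  have hpt2 : ∀ x : EuclideanSpace ℝ (Fin 3),
      (1 - 1 / ‖x‖) * ‖φ x‖ ^ 2 =
      (fun y : EuclideanSpace ℝ (Fin 3) => (1 - ν / ‖y‖) * ‖ψ y‖ ^ 2) (ν • x) := by
    intro x
    simp only [hφdef]
    rw [hdivν x]
  -- change of variables
  have hrank : Module.finrank ℝ (EuclideanSpace ℝ (Fin 3)) = 3 := finrank_euclideanSpace_fin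
  have hA : (∫ x : EuclideanSpace ℝ (Fin 3), ‖sigmaGrad φ x‖ ^ 2 / (1 + 1 / ‖x‖)) =
      (ν ^ 3)⁻¹ * (ν ^ 2 * ∫ x : EuclideanSpace ℝ (Fin 3),
        ‖sigmaGrad ψ x‖ ^ 2 / (1 + ν / ‖x‖)) := by
    simp_rw [hpt1]
    rw [Measure.integral_comp_smul_of_nonneg
      (μ := volume) (fun y : EuclideanSpace ℝ (Fin 3) =>
        ν ^ 2 * (‖sigmaGrad ψ y‖ ^ 2 / (1 + ν / ‖y‖))) ν (hR := hν.le),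
      hrank, integral_const_mul, smul_eq_mul]
  have hB : (∫ x : EuclideanSpace ℝ (Fin 3), (1 - 1 / ‖x‖) * ‖φ x‖ ^ 2) =
      (ν ^ 3)⁻¹ * ∫ x : EuclideanSpace ℝ (Fin 3), (1 - ν / ‖x‖) * ‖ψ x‖ ^ 2 := by
    simp_rw [hpt2]
    rw [Measure.integral_comp_smul_of_nonneg
      (μ := volume) (fun y : EuclideanSpace ℝ (Fin 3) => (1 - ν / ‖y‖) * ‖ψ y‖ ^ 2) ν
      (hR := hν.le), hrank, smul_eq_mul]
  have hH := hHardy φ hφc hφs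
  rw [hA, hB] at hH
  set A := ∫ x : EuclideanSpace ℝ (Fin 3), ‖sigmaGrad ψ x‖ ^ 2 / (1 + ν / ‖x‖) with hAdef
  set B := ∫ x : EuclideanSpace ℝ (Fin 3), (1 - ν / ‖x‖) * ‖ψ x‖ ^ 2 with hBdef
  have hApos : 0 ≤ A := integral_nonneg fun x => by positivity
  have hν3 : 0 < ν ^ 3 := by positivity
  have key : 0 ≤ ν ^ 2 * A + B := by
    have h := mul_nonneg hν3.le hH
    simp only [mul_add, mul_inv_cancel_left₀ hν3.ne'] at h
    linarith
  have h1 : 0 ≤ (1 - ν ^ 2) * A := mul_nonneg (by nlinarith) hApos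
  linarith
end
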